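/- The Multiprocessor-Scheduling reduction: given n jobs with lengths m_0,…,m_{n−1} ∈ ℕ, k machines, and deadline D, set p = n + 1, α = 0, β = 1, m_r = 0 for the extra root r. Then there is a k-ported gather schedule (blocks unsplittable, star tree rooted at r, each port receiving its assigned blocks sequentially) with completion time at most D if and only if the jobs can be partitioned into k sets each of total length at most D. -/
import Mathlib


open Finset

/-- Multiprocessor-Scheduling reduction: with `α = 0`, `β = 1`, a zero-size block at the
extra root and blocks unsplittable, a `k`-ported star gather schedule (an assignment `A` of
blocks to ports, each port receiving its blocks sequentially, completion time the maximum
port load) finishes within deadline `D` iff the `n` jobs with lengths `m i` can be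
partitioned into `k` sets each of total length at most `D`. -/
theorem stmt_15 (n k D : ℕ) (hk : 1 ≤ k) (m : Fin n → ℕ) :
    (∃ A : Fin n → Fin k,
        (Finset.univ.sup fun j : Fin k =>
          ∑ i ∈ Finset.univ.filter (fun i => A i = j), m i) ≤ D) ↔
    (∃ P : Fin k → Finset (Fin n),
        (∀ j j' : Fin k, j ≠ j' → Disjoint (P j) (P j')) ∧
        Finset.univ.biUnion P = Finset.univ ∧
        ∀ j : Fin k, ∑ i ∈ P j, m i ≤ D) := by
  constructor
  · rintro ⟨A, hA⟩
    refine ⟨fun j => Finset.univ.filter (fun i => A i = j), ?_, ?_, ?_⟩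
    · intro j j' hjj'
      simp only [Finset.disjoint_left, Finset.mem_filter]
      rintro i ⟨-, rfl⟩ ⟨-, h⟩
      exact hjj' h
    · ext i
      simp only [Finset.mem_biUnion, Finset.mem_filter, Finset.mem_univ, true_and,
        iff_true]
      exact ⟨A i, rfl⟩
    · intro j
      exact le_trans (Finset.le_sup (f := fun j => ∑ i ∈ Finset.univ.filter (fun i => A i = j), m i) (Finset.mem_univ j)) hA
  · rintro ⟨P, hdisj, hcov, hD⟩
    have hmem : ∀ i : Fin n, ∃ j, i ∈ P j := by
      intro i
      have : i ∈ Finset.univ.biUnion P := hcov ▸ Finset.mem_univ i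
      simpa using this
    choose A hAmem using hmem
    refine ⟨A, Finset.sup_le fun j _ => le_trans ?_ (hD j)⟩
    apply Finset.sum_le_sum_of_subset
    intro i hi
    simp only [Finset.mem_filter, Finset.mem_univ, true_and] at hi
    exact hi ▸ hAmem i
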